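/- (Theorem 2, existence of fully private input directions) Let L = N − k* ≥ 1. There exists a nonzero vector u ∈ ℝ^p and an integer τ with 1 ≤ τ ≤ L such that uᵀ𝒮(τ)u = 0 if and only if the stacked matrix 𝒪 ∈ ℝ^{(L·m)×p}, whose k-th block row (for k = 0, 1, …, L−1) is C A^k B, has rank strictly less than p. -/

import Mathlib

open Matrix Finset

private lemma sum_mulVec_aux {ι n' m' : Type*} [Fintype n'] (s : Finset ι)
    (f : ι → Matrix m' n' ℝ) (u : n' → ℝ) :
    (∑ i ∈ s, f i) *ᵥ u = ∑ i ∈ s, f i *ᵥ u := by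
  ext j
  simp only [Matrix.mulVec, dotProduct, Matrix.sum_apply, Finset.sum_apply, Finset.sum_mul]
  rw [Finset.sum_comm]

private lemma dotProduct_sum_aux {ι n' : Type*} [Fintype n'] (s : Finset ι)
    (u : n' → ℝ) (f : ι → n' → ℝ) :
    u ⬝ᵥ (∑ i ∈ s, f i) = ∑ i ∈ s, u ⬝ᵥ f i := by
  simp only [dotProduct, Finset.sum_apply, Finset.mul_sum]
  rw [Finset.sum_comm]

/-- **Theorem 2 (existence of fully private input directions).**
With `L = N − k* ≥ 1`, there exist a nonzero input direction `u` and a lag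
`τ ∈ {1,…,L}` with `uᵀ𝒮(τ)u = 0` if and only if the stacked input-observability matrix
`𝒪` with block rows `C A^k B`, `k = 0,…,L−1`, has rank strictly less than `p`. -/
theorem fully_private_direction_iff_rank_deficient
    (n m p N kstar : ℕ) (hk : kstar < N)
    (A : Matrix (Fin n) (Fin n) ℝ) (B : Matrix (Fin n) (Fin p) ℝ)
    (C : Matrix (Fin m) (Fin n) ℝ)
    (σe : Matrix (Fin m) (Fin m) ℝ) (hσe : σe.PosDef)
    (Atil : ℕ → ℕ → Matrix (Fin n) (Fin n) ℝ)
    (hAtil : ∀ k τ, Atil k τ =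
      ∑ l ∈ Finset.Icc kstar (min (kstar + τ - 1) (k - 1)), A ^ (k - 1 - l))
    (S : ℕ → Matrix (Fin p) (Fin p) ℝ)
    (hS : ∀ τ, S τ = ∑ k ∈ Finset.Icc (kstar + 1) N,
      (C * Atil k τ * B)ᵀ * σe⁻¹ * (C * Atil k τ * B))
    (𝒪 : Matrix (Fin (N - kstar) × Fin m) (Fin p) ℝ)
    (h𝒪 : ∀ (k : Fin (N - kstar)) (i : Fin m) (j : Fin p),
      𝒪 (k, i) j = (C * A ^ (k : ℕ) * B) i j) :
    (∃ u : Fin p → ℝ, u ≠ 0 ∧ ∃ τ : ℕ, 1 ≤ τ ∧ τ ≤ N - kstar ∧ u ⬝ᵥ (S τ *ᵥ u) = 0) ↔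
      𝒪.rank < p := by
  have hinv : (σe⁻¹).PosDef := hσe.inv
  -- quadratic form vanishes iff every block annihilates u
  have key : ∀ (τ : ℕ) (u : Fin p → ℝ), u ⬝ᵥ (S τ *ᵥ u) = 0 ↔
      ∀ k ∈ Finset.Icc (kstar + 1) N, (C * Atil k τ * B) *ᵥ u = 0 := by
    intro τ u
    have hrw : u ⬝ᵥ (S τ *ᵥ u) = ∑ k ∈ Finset.Icc (kstar + 1) N,
        ((C * Atil k τ * B) *ᵥ u) ⬝ᵥ (σe⁻¹ *ᵥ ((C * Atil k τ * B) *ᵥ u)) := by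
      rw [hS, sum_mulVec_aux, dotProduct_sum_aux]
      refine Finset.sum_congr rfl fun k _ => ?_
      rw [← Matrix.mulVec_mulVec, ← Matrix.mulVec_mulVec, Matrix.dotProduct_mulVec,
        Matrix.vecMul_transpose]
    rw [hrw]
    have hnn : ∀ k ∈ Finset.Icc (kstar + 1) N,
        0 ≤ ((C * Atil k τ * B) *ᵥ u) ⬝ᵥ (σe⁻¹ *ᵥ ((C * Atil k τ * B) *ᵥ u)) :=
      fun k _ => by simpa using hinv.posSemidef.dotProduct_mulVec_nonneg ((C * Atil k τ * B) *ᵥ u)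
    constructor
    · intro h0 k hkm
      by_contra hne
      have hz := (Finset.sum_eq_zero_iff_of_nonneg hnn).mp h0 k hkm
      have hpos : 0 < ((C * Atil k τ * B) *ᵥ u) ⬝ᵥ (σe⁻¹ *ᵥ ((C * Atil k τ * B) *ᵥ u)) := by
        simpa using hinv.dotProduct_mulVec_pos hne
      exact hpos.ne' hz
    · intro h
      refine Finset.sum_eq_zero fun k hkm => ?_
      rw [h k hkm]
      simp
  -- if the quadratic form vanishes for some admissible τ, all blocks C A^j B annihilate u
  have forward : ∀ (u : Fin p → ℝ) (τ : ℕ), 1 ≤ τ →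
      (∀ k ∈ Finset.Icc (kstar + 1) N, (C * Atil k τ * B) *ᵥ u = 0) →
      ∀ j, j < N - kstar → (C * A ^ j * B) *ᵥ u = 0 := by
    intro u τ hτ hvan j
    induction j using Nat.strong_induction_on with
    | _ j IH =>
      intro hj
      have hmem : kstar + 1 + j ∈ Finset.Icc (kstar + 1) N := by
        rw [Finset.mem_Icc]; omega
      have h0 := hvan _ hmem
      rw [hAtil] at h0
      have hmin : min (kstar + τ - 1) (kstar + 1 + j - 1) = kstar + min (τ - 1) j := by omega
      rw [hmin, Matrix.mul_sum, Matrix.sum_mul, sum_mulVec_aux] at h0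
      have hsum : ∑ l ∈ Finset.Icc kstar (kstar + min (τ - 1) j),
          (C * A ^ (kstar + 1 + j - 1 - l) * B) *ᵥ u = (C * A ^ j * B) *ᵥ u := by
        rw [Finset.sum_eq_single_of_mem kstar (by rw [Finset.mem_Icc]; omega)]
        · have he : kstar + 1 + j - 1 - kstar = j := by omega
          rw [he]
        · intro l hl hne
          have hlm := Finset.mem_Icc.mp hl
          have hd : min (τ - 1) j ≤ j := min_le_right _ _
          have he : kstar + 1 + j - 1 - l < j := by omega
          exact IH _ he (by omega)
      rw [hsum] at h0
      exact h0
  -- kernel characterization of rank deficiency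
  have hrn : 𝒪.rank + Module.finrank ℝ (LinearMap.ker 𝒪.mulVecLin) = p := by
    have := LinearMap.finrank_range_add_finrank_ker 𝒪.mulVecLin
    simpa [Matrix.rank] using this
  have hrank : 𝒪.rank < p ↔ ∃ u : Fin p → ℝ, u ≠ 0 ∧ 𝒪 *ᵥ u = 0 := by
    constructor
    · intro h
      have hker : LinearMap.ker 𝒪.mulVecLin ≠ ⊥ := by
        intro hbot
        rw [hbot] at hrn
        simp at hrn
        omega
      obtain ⟨u, hu, hune⟩ := Submodule.ne_bot_iff _ |>.mp hker
      exact ⟨u, hune, by simpa [Matrix.mulVecLin_apply] using LinearMap.mem_ker.mp hu⟩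
    · rintro ⟨u, hune, hu⟩
      have hker : LinearMap.ker 𝒪.mulVecLin ≠ ⊥ := by
        refine (Submodule.ne_bot_iff _).mpr ⟨u, ?_, hune⟩
        rw [LinearMap.mem_ker]
        simpa [Matrix.mulVecLin_apply] using hu
      have hfr : Module.finrank ℝ (LinearMap.ker 𝒪.mulVecLin) ≠ 0 := by
        intro h0
        exact hker (Submodule.finrank_eq_zero.mp h0)
      omega
  -- componentwise description of 𝒪 *ᵥ u = 0
  have hOv : ∀ u : Fin p → ℝ, 𝒪 *ᵥ u = 0 ↔
      ∀ k : Fin (N - kstar), (C * A ^ (k : ℕ) * B) *ᵥ u = 0 := by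
    intro u
    constructor
    · intro h k
      funext i
      have := congrFun h (k, i)
      simpa [Matrix.mulVec, dotProduct, h𝒪] using this
    · intro h
      funext ki
      obtain ⟨k, i⟩ := ki
      have := congrFun (h k) i
      simpa [Matrix.mulVec, dotProduct, h𝒪] using this
  constructor
  · rintro ⟨u, hu, τ, hτ1, _, h0⟩
    refine hrank.mpr ⟨u, hu, (hOv u).mpr fun k => ?_⟩
    exact forward u τ hτ1 ((key τ u).mp h0) k k.isLt
  · intro h
    obtain ⟨u, hu, h0⟩ := hrank.mp h
    refine ⟨u, hu, 1, le_refl 1, by omega, (key 1 u).mpr fun k hkm => ?_⟩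
    have hkm' := Finset.mem_Icc.mp hkm
    rw [hAtil]
    have h1 : min (kstar + 1 - 1) (k - 1) = kstar := by omega
    rw [h1, Finset.Icc_self, Finset.sum_singleton]
    have hlt : k - 1 - kstar < N - kstar := by omega
    exact (hOv u).mp h0 ⟨k - 1 - kstar, hlt⟩
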